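/- Let G = (I⁰, I¹; F; w) be an instance and let α be a locally maximin refinement of the side-0 vertex weights, inducing the payload density vector ρ on I¹. Then ρ coincides with the density vector ρ* assigned by the density decomposition of G with ground set I¹: for every j ∈ I¹, ρ(j) = ρ*(j). Moreover, if (S⁰_ℓ, S¹_ℓ) is a pair of the density decomposition with ground set I¹, then S⁰_ℓ is exactly the set of vertices i ∈ I⁰ with α(ij) > 0 for some j ∈ S¹_ℓ. In particular, any two locally maximin refinements of the side-0 weights induce the same payload density vector on I¹. -/

import Mathlib

set_option linter.unusedSectionVars false
set_option linter.unusedVariables false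

open Finset

variable {V : Type*} [DecidableEq V]

/-- `(I0, I1; F; w)` is a valid input instance: the vertex sets `I0`, `I1` are disjoint,
every edge has its first endpoint in `I0` and second endpoint in `I1`,
and vertex weights are positive. -/
def IsInstance (I0 I1 : Finset V) (F : Finset (V × V)) (w : V → ℝ) : Prop :=
  Disjoint I0 I1 ∧ (∀ e ∈ F, e.1 ∈ I0 ∧ e.2 ∈ I1) ∧ (∀ v ∈ I0 ∪ I1, 0 < w v)

/-- Payload received by a side-0 vertex `i` from edge weights `a`
(the sum of `a` over edges incident to `i`). -/
noncomputable def payload0 (F : Finset (V × V)) (a : V × V → ℝ) (i : V) : ℝ :=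
  ∑ e ∈ F.filter (fun e => e.1 = i), a e

/-- Payload received by a side-1 vertex `j` from edge weights `a`. -/
noncomputable def payload1 (F : Finset (V × V)) (a : V × V → ℝ) (j : V) : ℝ :=
  ∑ e ∈ F.filter (fun e => e.2 = j), a e

/-- `a` is a refinement of the side-0 vertex weights. -/
def IsRefinement0 (I0 : Finset V) (F : Finset (V × V)) (w : V → ℝ) (a : V × V → ℝ) : Prop :=
  (∀ e, 0 ≤ a e) ∧ (∀ e, e ∉ F → a e = 0) ∧
    ∀ i ∈ I0, (∃ j, (i, j) ∈ F) → payload0 F a i = w i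

/-- `a` is a refinement of the side-1 vertex weights. -/
def IsRefinement1 (I1 : Finset V) (F : Finset (V × V)) (w : V → ℝ) (a : V × V → ℝ) : Prop :=
  (∀ e, 0 ≤ a e) ∧ (∀ e, e ∉ F → a e = 0) ∧
    ∀ j ∈ I1, (∃ i, (i, j) ∈ F) → payload1 F a j = w j

/-- Payload density at a side-0 vertex. -/
noncomputable def density0 (F : Finset (V × V)) (w : V → ℝ) (a : V × V → ℝ) (i : V) : ℝ :=
  payload0 F a i / w i

/-- Payload density at a side-1 vertex. -/
noncomputable def density1 (F : Finset (V × V)) (w : V → ℝ) (a : V × V → ℝ) (j : V) : ℝ :=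
  payload1 F a j / w j

/-- A side-0 refinement is locally maximin: positive weight is sent only to neighbours
of minimum payload density. -/
def LocallyMaximin0 (F : Finset (V × V)) (w : V → ℝ) (a : V × V → ℝ) : Prop :=
  ∀ e ∈ F, 0 < a e → ∀ k, (e.1, k) ∈ F → density1 F w a e.2 ≤ density1 F w a k

/-- A side-1 refinement is locally maximin. -/
def LocallyMaximin1 (F : Finset (V × V)) (w : V → ℝ) (a : V × V → ℝ) : Prop :=
  ∀ e ∈ F, 0 < a e → ∀ k, (k, e.2) ∈ F → density0 F w a e.1 ≤ density0 F w a k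

/-- `b` is the proportional response to the side-0 refinement `a`. -/
def IsPropRespOf0 (F : Finset (V × V)) (w : V → ℝ) (a b : V × V → ℝ) : Prop :=
  (∀ e, e ∉ F → b e = 0) ∧ ∀ e ∈ F, b e = a e * w e.2 / payload1 F a e.2

/-- `a` is the proportional response to the side-1 refinement `b`. -/
def IsPropRespOf1 (F : Finset (V × V)) (w : V → ℝ) (b a : V × V → ℝ) : Prop :=
  (∀ e, e ∉ F → a e = 0) ∧ ∀ e ∈ F, a e = b e * w e.1 / payload0 F b e.1

/-- Extended-real ratio with the conventions `0/0 = 0` and `x/0 = +∞` for `x > 0`. -/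
noncomputable def eratio (a b : ℝ) : EReal :=
  if b = 0 then (if a = 0 then (0 : EReal) else ⊤) else ((a / b : ℝ) : EReal)

/-- Total weight of a vertex set. -/
noncomputable def wsum (w : V → ℝ) (S : Finset V) : ℝ := ∑ v ∈ S, w v

variable [Fintype V]

/-- With `I1` as ground set, the closed neighbourhood `F[S]` of `S ⊆ I1`:
side-0 vertices having at least one neighbour, all of whose neighbours lie in `S`. -/
def closedNbr1 (I0 : Finset V) (F : Finset (V × V)) (S : Finset V) : Finset V :=
  I0.filter fun i => (∃ j, (i, j) ∈ F) ∧ ∀ j, (i, j) ∈ F → j ∈ S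

/-- Density `ρ(S) = w(F[S]) / w(S)` of `S ⊆ I1`, with the conventions
`0/0 = 0` and `x/0 = +∞`. -/
noncomputable def dens1 (I0 : Finset V) (F : Finset (V × V)) (w : V → ℝ)
    (S : Finset V) : EReal :=
  eratio (wsum w (closedNbr1 I0 F S)) (wsum w S)

/-- `S` is the maximal densest subset of the ground set `I1`:
it is densest and contains every densest subset. -/
def IsMaxDensest1 (I0 I1 : Finset V) (F : Finset (V × V)) (w : V → ℝ)
    (S : Finset V) : Prop :=
  S ⊆ I1 ∧ (∀ T ⊆ I1, dens1 I0 F w T ≤ dens1 I0 F w S) ∧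
    ∀ T ⊆ I1, (∀ T' ⊆ I1, dens1 I0 F w T' ≤ dens1 I0 F w T) → T ⊆ S

/-- Restriction of the edge set to a sub-instance. -/
def restrictF (F : Finset (V × V)) (I0 I1 : Finset V) : Finset (V × V) :=
  F.filter fun e => e.1 ∈ I0 ∧ e.2 ∈ I1

/-- `IsDecomp1 w I0 I1 F L` states that the list `L` of pairs `(S⁰_ℓ, S¹_ℓ)` is the density
decomposition of the instance `(I0, I1; F; w)` with ground set `I1`: at each step `S¹_ℓ` is
the maximal densest subset of the current sub-instance, `S⁰_ℓ = F[S¹_ℓ]` is its closed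
neighbourhood, and both are removed together with all incident edges, until both sides
are empty. -/
def IsDecomp1 (w : V → ℝ) :
    Finset V → Finset V → Finset (V × V) → List (Finset V × Finset V) → Prop
  | I0', I1', _, [] => I0' = ∅ ∧ I1' = ∅
  | I0', I1', F', p :: rest =>
      (I0'.Nonempty ∨ I1'.Nonempty) ∧
      IsMaxDensest1 I0' I1' F' w p.2 ∧
      p.1 = closedNbr1 I0' F' p.2 ∧
      IsDecomp1 w (I0' \ p.1) (I1' \ p.2) (restrictF F' (I0' \ p.1) (I1' \ p.2)) rest

/-! ### Auxiliary lemmas -/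

section Aux

variable {I0 I1 : Finset V} {F : Finset (V × V)} {w : V → ℝ} {a : V × V → ℝ}

lemma sum_payload1_eq (F : Finset (V × V)) (a : V × V → ℝ) (S : Finset V) :
    ∑ j ∈ S, payload1 F a j = ∑ e ∈ F, if e.2 ∈ S then a e else 0 := by
  simp only [payload1, Finset.sum_filter]
  rw [Finset.sum_comm]
  exact Finset.sum_congr rfl fun e _ => Finset.sum_ite_eq S e.2 fun _ => a e

lemma sum_payload0_eq (F : Finset (V × V)) (a : V × V → ℝ) (S : Finset V) :
    ∑ i ∈ S, payload0 F a i = ∑ e ∈ F, if e.1 ∈ S then a e else 0 := by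
  simp only [payload0, Finset.sum_filter]
  rw [Finset.sum_comm]
  exact Finset.sum_congr rfl fun e _ => Finset.sum_ite_eq S e.1 fun _ => a e

lemma payload1_nonneg (h : ∀ e, 0 ≤ a e) (j : V) : 0 ≤ payload1 F a j :=
  Finset.sum_nonneg fun e _ => h e

lemma density1_nonneg (h : ∀ e, 0 ≤ a e) {j : V} (hw : 0 < w j) :
    0 ≤ density1 F w a j :=
  div_nonneg (payload1_nonneg h j) hw.le

lemma payload1_eq_density1_mul {j : V} (hw : w j ≠ 0) :
    payload1 F a j = density1 F w a j * w j :=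
  (div_mul_cancel₀ _ hw).symm

lemma wsum_pos {S : Finset V} (hS : S.Nonempty) (hw : ∀ v ∈ S, 0 < w v) :
    0 < wsum w S :=
  Finset.sum_pos hw hS

lemma wsum_nonneg {S : Finset V} (hw : ∀ v ∈ S, 0 < w v) : 0 ≤ wsum w S :=
  Finset.sum_nonneg fun v hv => (hw v hv).le

/-- The total weight of a closed neighbourhood equals the flow it emits. -/
lemma wsum_closedNbr1 (hG : IsInstance I0 I1 F w) (ha : IsRefinement0 I0 F w a)
    (S : Finset V) :
    wsum w (closedNbr1 I0 F S) = ∑ e ∈ F, if e.1 ∈ closedNbr1 I0 F S then a e else 0 := by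
  rw [← sum_payload0_eq]
  refine Finset.sum_congr rfl fun i hi => ?_
  simp only [closedNbr1, Finset.mem_filter] at hi
  exact (ha.2.2 i hi.1 hi.2.1).symm

/-- Any refinement pours at least `w(F[S])` into `S`. -/
lemma lemA (hG : IsInstance I0 I1 F w) (ha : IsRefinement0 I0 F w a) (S : Finset V) :
    wsum w (closedNbr1 I0 F S) ≤ ∑ j ∈ S, payload1 F a j := by
  rw [wsum_closedNbr1 hG ha S, sum_payload1_eq]
  refine Finset.sum_le_sum fun e he => ?_
  by_cases h : e.1 ∈ closedNbr1 I0 F S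
  · have h' := h
    simp only [closedNbr1, Finset.mem_filter] at h'
    have he2 : e.2 ∈ S := h'.2.2 e.2 (by simpa only [Prod.mk.eta] using he)
    rw [if_pos h, if_pos he2]
  · rw [if_neg h]
    split_ifs with h2
    · exact ha.1 e
    · exact le_refl 0

/-- A locally maximin refinement pours at most `w(F[S_t])` into the superlevel set `S_t`. -/
lemma lemB (hG : IsInstance I0 I1 F w) (ha : IsRefinement0 I0 F w a)
    (hm : LocallyMaximin0 F w a) (t : ℝ) :
    ∑ j ∈ I1.filter (fun j => t ≤ density1 F w a j), payload1 F a j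
      ≤ wsum w (closedNbr1 I0 F (I1.filter (fun j => t ≤ density1 F w a j))) := by
  set S := I1.filter (fun j => t ≤ density1 F w a j) with hSdef
  rw [wsum_closedNbr1 hG ha S, sum_payload1_eq]
  refine Finset.sum_le_sum fun e he => ?_
  by_cases hpos : 0 < a e
  · by_cases h2 : e.2 ∈ S
    · have h1 : e.1 ∈ closedNbr1 I0 F S := by
        simp only [closedNbr1, Finset.mem_filter]
        refine ⟨(hG.2.1 e he).1, ⟨e.2, by simpa only [Prod.mk.eta] using he⟩, fun k hk => ?_⟩
        have hkI1 : k ∈ I1 := (hG.2.1 (e.1, k) hk).2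
        have hd : density1 F w a e.2 ≤ density1 F w a k := hm e he hpos k hk
        have ht : t ≤ density1 F w a e.2 := (Finset.mem_filter.mp h2).2
        exact Finset.mem_filter.mpr ⟨hkI1, ht.trans hd⟩
      rw [if_pos h2, if_pos h1]
    · rw [if_neg h2]
      split_ifs with h1
      · exact ha.1 e
      · exact le_refl 0
  · have ha0 : a e = 0 := le_antisymm (not_lt.mp hpos) (ha.1 e)
    split_ifs <;> simp [ha0]

/-- Key comparison: if `a` is locally maximin, `a'` is any refinement whose densities are
pointwise at most those of `a` on the superlevel set `{ρ ≥ t}`, with strict inequality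
somewhere, we get a contradiction. -/
lemma key_lt (hG : IsInstance I0 I1 F w) (ha : IsRefinement0 I0 F w a)
    (hm : LocallyMaximin0 F w a) {a' : V × V → ℝ} (ha' : IsRefinement0 I0 F w a')
    (t : ℝ)
    (H1 : ∀ j ∈ I1, t ≤ density1 F w a j → density1 F w a' j ≤ density1 F w a j)
    (j0 : V) (hj0 : j0 ∈ I1) (hj0t : t ≤ density1 F w a j0)
    (hlt : density1 F w a' j0 < density1 F w a j0) : False := by
  set S := I1.filter (fun j => t ≤ density1 F w a j) with hSdef
  have hA := lemA hG ha' S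
  have hB := lemB hG ha hm t
  have hsum : ∑ j ∈ S, payload1 F a j ≤ ∑ j ∈ S, payload1 F a' j := hB.trans hA
  have hwpos : ∀ j ∈ S, 0 < w j := fun j hj =>
    hG.2.2 j (Finset.mem_union_right _ (Finset.mem_filter.mp hj).1)
  have hstrict : ∑ j ∈ S, payload1 F a' j < ∑ j ∈ S, payload1 F a j := by
    refine Finset.sum_lt_sum (fun j hj => ?_) ⟨j0, Finset.mem_filter.mpr ⟨hj0, hj0t⟩, ?_⟩
    · obtain ⟨hjI1, hjt⟩ := Finset.mem_filter.mp hj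
      rw [payload1_eq_density1_mul (hwpos j hj).ne',
        payload1_eq_density1_mul (w := w) (hwpos j hj).ne']
      exact mul_le_mul_of_nonneg_right (H1 j hjI1 hjt) (hwpos j hj).le
    · have hw0 : 0 < w j0 := hG.2.2 j0 (Finset.mem_union_right _ hj0)
      rw [payload1_eq_density1_mul hw0.ne', payload1_eq_density1_mul (w := w) hw0.ne']
      exact mul_lt_mul_of_pos_right hlt hw0
  exact absurd hsum (not_le.mpr hstrict)

/-- Uniqueness of locally maximin payload densities. -/
lemma maximin_unique (hG : IsInstance I0 I1 F w) (ha : IsRefinement0 I0 F w a)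
    (hm : LocallyMaximin0 F w a) {a' : V × V → ℝ} (ha' : IsRefinement0 I0 F w a')
    (hm' : LocallyMaximin0 F w a') :
    ∀ j ∈ I1, density1 F w a j = density1 F w a' j := by
  by_contra hcon
  push_neg at hcon
  obtain ⟨j1, hj1, hne1⟩ := hcon
  set ρ := density1 F w a with hρ
  set ρ' := density1 F w a' with hρ'
  set D := I1.filter (fun j => ρ j ≠ ρ' j) with hD
  have hDne : D.Nonempty := ⟨j1, Finset.mem_filter.mpr ⟨hj1, hne1⟩⟩
  obtain ⟨j0, hj0D, hj0⟩ := Finset.exists_mem_eq_sup' hDne (fun j => max (ρ j) (ρ' j))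
  set t := D.sup' hDne (fun j => max (ρ j) (ρ' j)) with ht
  have hj0I1 : j0 ∈ I1 := (Finset.mem_filter.mp hj0D).1
  have hj0ne : ρ j0 ≠ ρ' j0 := (Finset.mem_filter.mp hj0D).2
  have hmaxle : ∀ j ∈ D, max (ρ j) (ρ' j) ≤ t := fun j hj =>
    Finset.le_sup' (fun j => max (ρ j) (ρ' j)) hj
  rcases max_choice (ρ j0) (ρ' j0) with hc | hc
  · -- t = ρ j0, ρ' j0 < t
    have htj0 : t = ρ j0 := hj0.trans hc
    have hlt : ρ' j0 < ρ j0 := by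
      rcases lt_or_ge (ρ' j0) (ρ j0) with h | h
      · exact h
      · have h2 := le_max_right (ρ j0) (ρ' j0)
        rw [hc] at h2
        exact absurd (le_antisymm h2 h).symm hj0ne
    refine key_lt hG ha hm ha' t (fun j hjI1 hjt => ?_) j0 hj0I1 htj0.le hlt
    by_cases hje : ρ j = ρ' j
    · exact hje.ge
    · have hjD : j ∈ D := Finset.mem_filter.mpr ⟨hjI1, hje⟩
      exact le_trans (le_max_right _ _) ((hmaxle j hjD).trans hjt)
  · -- t = ρ' j0, ρ j0 < t : symmetric
    have htj0 : t = ρ' j0 := hj0.trans hc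
    have hlt : ρ j0 < ρ' j0 := by
      rcases lt_or_ge (ρ j0) (ρ' j0) with h | h
      · exact h
      · have h2 := le_max_left (ρ j0) (ρ' j0)
        rw [hc] at h2
        exact absurd (le_antisymm h2 h) hj0ne
    refine key_lt hG ha' hm' ha t (fun j hjI1 hjt => ?_) j0 hj0I1 htj0.le hlt
    by_cases hje : ρ j = ρ' j
    · exact hje.le
    · have hjD : j ∈ D := Finset.mem_filter.mpr ⟨hjI1, hje⟩
      exact le_trans (le_max_left _ _) ((hmaxle j hjD).trans hjt)

lemma closedNbr1_empty (I0 : Finset V) (F : Finset (V × V)) :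
    closedNbr1 I0 F ∅ = ∅ := by
  ext i
  simp only [closedNbr1, Finset.mem_filter, Finset.notMem_empty, iff_false, not_and]
  intro _ hex hall
  obtain ⟨j, hj⟩ := hex
  exact hall j hj

lemma dens1_empty (I0 : Finset V) (F : Finset (V × V)) (w : V → ℝ) :
    dens1 I0 F w ∅ = 0 := by
  simp [dens1, closedNbr1_empty, wsum, eratio]

lemma dens1_coe {S : Finset V} (h : wsum w S ≠ 0) :
    dens1 I0 F w S = ((wsum w (closedNbr1 I0 F S) / wsum w S : ℝ) : EReal) := by
  rw [dens1, eratio, if_neg h]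

/-- Analysis of the first block of the decomposition: on the maximal densest subset `S1`,
the maximin densities are constant equal to `w(F[S1])/w(S1)`, and `F[S1]` is the set of
vertices sending positive flow into `S1`. -/
lemma block_analysis (hG : IsInstance I0 I1 F w) (ha : IsRefinement0 I0 F w a)
    (hm : LocallyMaximin0 F w a) (hI1 : I1.Nonempty)
    {S1 : Finset V} (hmax : IsMaxDensest1 I0 I1 F w S1) :
    (∀ j ∈ S1, density1 F w a j = wsum w (closedNbr1 I0 F S1) / wsum w S1) ∧
    (∀ i : V, i ∈ closedNbr1 I0 F S1 ↔ ∃ j ∈ S1, 0 < a (i, j)) := by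
  obtain ⟨hsub, hge, hml⟩ := hmax
  obtain ⟨jm, hjmI1, hjm⟩ := Finset.exists_mem_eq_sup' hI1 (density1 F w a)
  set t := I1.sup' hI1 (density1 F w a) with htdef
  have hwI1 : ∀ j ∈ I1, 0 < w j := fun j hj => hG.2.2 j (Finset.mem_union_right _ hj)
  have hle_t : ∀ j ∈ I1, density1 F w a j ≤ t := fun j hj =>
    Finset.le_sup' (density1 F w a) hj
  have ht0 : 0 ≤ t := by rw [hjm]; exact density1_nonneg ha.1 (hwI1 jm hjmI1)
  set St := I1.filter (fun j => t ≤ density1 F w a j) with hStdef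
  have hjmSt : jm ∈ St := Finset.mem_filter.mpr ⟨hjmI1, hjm.le⟩
  have hStsub : St ⊆ I1 := Finset.filter_subset _ _
  have hwSt : 0 < wsum w St := wsum_pos ⟨jm, hjmSt⟩ fun v hv => hwI1 v (hStsub hv)
  have hAB : ∑ j ∈ St, payload1 F a j = wsum w (closedNbr1 I0 F St) :=
    le_antisymm (lemB hG ha hm t) (lemA hG ha St)
  have hpaySt : ∀ j ∈ St, payload1 F a j = t * w j := by
    intro j hj
    obtain ⟨hjI1, hjt⟩ := Finset.mem_filter.mp hj
    have hjd : density1 F w a j = t := le_antisymm (hle_t j hjI1) hjt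
    rw [payload1_eq_density1_mul (hwI1 j hjI1).ne', hjd]
  have hNSt : wsum w (closedNbr1 I0 F St) = t * wsum w St := by
    rw [← hAB, Finset.sum_congr rfl hpaySt, wsum, Finset.mul_sum]
  have hupper : ∀ S ⊆ I1, wsum w (closedNbr1 I0 F S) ≤ t * wsum w S := by
    intro S hS
    refine (lemA hG ha S).trans ?_
    rw [wsum, Finset.mul_sum]
    refine Finset.sum_le_sum fun j hj => ?_
    rw [payload1_eq_density1_mul (hwI1 j (hS hj)).ne']
    exact mul_le_mul_of_nonneg_right (hle_t j (hS hj)) (hwI1 j (hS hj)).le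
  have hdensle : ∀ S ⊆ I1, dens1 I0 F w S ≤ ((t : ℝ) : EReal) := by
    intro S hS
    rcases S.eq_empty_or_nonempty with rfl | hSne
    · rw [dens1_empty]
      exact EReal.coe_nonneg.mpr ht0
    · have hwS : 0 < wsum w S := wsum_pos hSne fun v hv => hwI1 v (hS hv)
      rw [dens1_coe hwS.ne', EReal.coe_le_coe_iff]
      exact (div_le_iff₀ hwS).mpr (hupper S hS)
  have hdensSt : dens1 I0 F w St = ((t : ℝ) : EReal) := by
    rw [dens1_coe hwSt.ne', hNSt, mul_div_cancel_right₀ t hwSt.ne']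
  have hSt_le_S1 : St ⊆ S1 :=
    hml St hStsub fun T' hT' => (hdensle T' hT').trans hdensSt.ge
  have hS1ne : S1.Nonempty := ⟨jm, hSt_le_S1 hjmSt⟩
  have hwS1 : 0 < wsum w S1 := wsum_pos hS1ne fun v hv => hwI1 v (hsub hv)
  have hdensS1 : dens1 I0 F w S1 = ((t : ℝ) : EReal) :=
    le_antisymm (hdensle S1 hsub) (hdensSt ▸ hge St hStsub)
  have hNS1 : wsum w (closedNbr1 I0 F S1) = t * wsum w S1 := by
    rw [dens1_coe hwS1.ne'] at hdensS1
    have h := EReal.coe_eq_coe_iff.mp hdensS1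
    rw [div_eq_iff hwS1.ne'] at h
    rw [h, mul_comm]
  have hρS1 : ∀ j ∈ S1, density1 F w a j = t := by
    have hhigh : ∀ j ∈ S1, payload1 F a j ≤ t * w j := by
      intro j hj
      rw [payload1_eq_density1_mul (hwI1 j (hsub hj)).ne']
      exact mul_le_mul_of_nonneg_right (hle_t j (hsub hj)) (hwI1 j (hsub hj)).le
    have hlow : ∑ j ∈ S1, t * w j ≤ ∑ j ∈ S1, payload1 F a j := by
      have hA := lemA hG ha S1
      rw [hNS1] at hA
      calc ∑ j ∈ S1, t * w j = t * wsum w S1 := by rw [wsum, Finset.mul_sum]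
        _ ≤ ∑ j ∈ S1, payload1 F a j := hA
    have hsumeq : ∑ j ∈ S1, payload1 F a j = ∑ j ∈ S1, t * w j :=
      le_antisymm (Finset.sum_le_sum hhigh) hlow
    intro j hj
    have heq := (Finset.sum_eq_sum_iff_of_le hhigh).mp hsumeq j hj
    have hwj := hwI1 j (hsub hj)
    rw [payload1_eq_density1_mul hwj.ne'] at heq
    exact mul_right_cancel₀ hwj.ne' heq
  have htval : t = wsum w (closedNbr1 I0 F S1) / wsum w S1 := by
    rw [hNS1, mul_div_cancel_right₀ t hwS1.ne']
  refine ⟨fun j hj => by rw [hρS1 j hj, htval], fun i => ?_⟩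
  constructor
  · intro hi
    have hi' := hi
    simp only [closedNbr1, Finset.mem_filter] at hi'
    obtain ⟨hiI0, ⟨j0, hj0⟩, hall⟩ := hi'
    by_contra hno
    push_neg at hno
    have hpay : payload0 F a i = w i := ha.2.2 i hiI0 ⟨j0, hj0⟩
    have hzero : payload0 F a i = 0 := by
      refine Finset.sum_eq_zero fun e he => ?_
      obtain ⟨heF, he1⟩ := Finset.mem_filter.mp he
      have heid : e = (i, e.2) := by rw [← he1]
      have he2S1 : e.2 ∈ S1 := hall e.2 (by rw [← heid]; exact heF)
      rw [heid]
      exact le_antisymm (hno e.2 he2S1) (ha.1 _)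
    have hwi : 0 < w i := hG.2.2 i (Finset.mem_union_left _ hiI0)
    exact absurd (hpay.symm.trans hzero) hwi.ne'
  · rintro ⟨j, hjS1, hpos⟩
    have hijF : (i, j) ∈ F := by
      by_contra hnot
      rw [ha.2.1 _ hnot] at hpos
      exact lt_irrefl 0 hpos
    simp only [closedNbr1, Finset.mem_filter]
    refine ⟨(hG.2.1 _ hijF).1, ⟨j, hijF⟩, fun k hk => ?_⟩
    have hkI1 : k ∈ I1 := (hG.2.1 _ hk).2
    have hd : density1 F w a j ≤ density1 F w a k := hm (i, j) hijF hpos k hk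
    have hjt : density1 F w a j = t := hρS1 j hjS1
    exact hSt_le_S1 (Finset.mem_filter.mpr ⟨hkI1, by rw [← hjt]; exact hd⟩)

lemma mem_restrictF {F : Finset (V × V)} {A B : Finset V} {e : V × V} :
    e ∈ restrictF F A B ↔ e ∈ F ∧ e.1 ∈ A ∧ e.2 ∈ B := by
  unfold restrictF
  exact Finset.mem_filter

/-- Passing to the sub-instance obtained by deleting the first block preserves all
relevant structure. -/
lemma sub_instance (hG : IsInstance I0 I1 F w) (ha : IsRefinement0 I0 F w a)
    (hm : LocallyMaximin0 F w a) {S1 : Finset V} (hS1 : S1 ⊆ I1)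
    (hsupp : ∀ i : V, i ∈ closedNbr1 I0 F S1 ↔ ∃ j ∈ S1, 0 < a (i, j)) :
    IsInstance (I0 \ closedNbr1 I0 F S1) (I1 \ S1)
        (restrictF F (I0 \ closedNbr1 I0 F S1) (I1 \ S1)) w ∧
      IsRefinement0 (I0 \ closedNbr1 I0 F S1) (restrictF F (I0 \ closedNbr1 I0 F S1) (I1 \ S1)) w
        (fun e => if e ∈ restrictF F (I0 \ closedNbr1 I0 F S1) (I1 \ S1) then a e else 0) ∧
      LocallyMaximin0 (restrictF F (I0 \ closedNbr1 I0 F S1) (I1 \ S1)) w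
        (fun e => if e ∈ restrictF F (I0 \ closedNbr1 I0 F S1) (I1 \ S1) then a e else 0) ∧
      (∀ j ∈ I1 \ S1,
        density1 (restrictF F (I0 \ closedNbr1 I0 F S1) (I1 \ S1)) w
          (fun e => if e ∈ restrictF F (I0 \ closedNbr1 I0 F S1) (I1 \ S1) then a e else 0) j
          = density1 F w a j) ∧
      (∀ i : V, ∀ j ∈ I1 \ S1,
        ((0 : ℝ) < (if (i, j) ∈ restrictF F (I0 \ closedNbr1 I0 F S1) (I1 \ S1)
            then a (i, j) else 0)) ↔ 0 < a (i, j)) := by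
  set S0 := closedNbr1 I0 F S1 with hS0
  set I0' := I0 \ S0 with hI0'
  set I1' := I1 \ S1 with hI1'
  set F' := restrictF F I0' I1' with hF'def
  set a'' := fun e => if e ∈ F' then a e else 0 with ha''def
  have hF'sub : F' ⊆ F := Finset.filter_subset _ _
  have hS0nb : ∀ i ∈ S0, ∀ k, (i, k) ∈ F → k ∈ S1 := by
    intro i hi k hk
    simp only [hS0, closedNbr1, Finset.mem_filter] at hi
    exact hi.2.2 k hk
  have hsame : ∀ e ∈ F, e.1 ∉ S0 → e.2 ∉ S1 → e ∈ F' := fun e heF h1 h2 =>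
    mem_restrictF.mpr ⟨heF, Finset.mem_sdiff.mpr ⟨(hG.2.1 e heF).1, h1⟩,
      Finset.mem_sdiff.mpr ⟨(hG.2.1 e heF).2, h2⟩⟩
  have hzero : ∀ e ∈ F, e ∉ F' → e.1 ∉ S0 → a e = 0 := by
    intro e heF heF' he1
    by_contra hne
    have hpos : 0 < a e := lt_of_le_of_ne (ha.1 e) (Ne.symm hne)
    have h2 : e.2 ∈ S1 := by
      by_contra h2n
      exact heF' (hsame e heF he1 h2n)
    exact he1 ((hsupp e.1).mpr ⟨e.2, h2, by simp only [Prod.mk.eta]; exact hpos⟩)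
  have hfil : ∀ j ∈ I1', F'.filter (fun e => e.2 = j) = F.filter (fun e => e.2 = j) := by
    intro j hj
    obtain ⟨hjI1, hjS1⟩ := Finset.mem_sdiff.mp hj
    ext e
    simp only [Finset.mem_filter]
    constructor
    · rintro ⟨heF', he2⟩
      exact ⟨hF'sub heF', he2⟩
    · rintro ⟨heF, he2⟩
      refine ⟨hsame e heF (fun h1S0 => ?_) (by rw [he2]; exact hjS1), he2⟩
      exact hjS1 (he2 ▸ hS0nb e.1 h1S0 e.2 (by simp only [Prod.mk.eta]; exact heF))
  have hpay_eq : ∀ j ∈ I1', payload1 F' a'' j = payload1 F a j := by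
    intro j hj
    unfold payload1
    have h1 : ∑ e ∈ F'.filter (fun e => e.2 = j), a'' e
        = ∑ e ∈ F'.filter (fun e => e.2 = j), a e :=
      Finset.sum_congr rfl fun e he => by
        simp only [ha''def]
        rw [if_pos (Finset.mem_filter.mp he).1]
    rw [h1, hfil j hj]
  have hdens_eq : ∀ j ∈ I1', density1 F' w a'' j = density1 F w a j := by
    intro j hj
    unfold density1
    rw [hpay_eq j hj]
  have hGsub : IsInstance I0' I1' F' w := by
    refine ⟨hG.1.mono Finset.sdiff_subset Finset.sdiff_subset,
      fun e he => (mem_restrictF.mp he).2, fun v hv => ?_⟩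
    rcases Finset.mem_union.mp hv with h | h
    · exact hG.2.2 v (Finset.mem_union_left _ (Finset.sdiff_subset h))
    · exact hG.2.2 v (Finset.mem_union_right _ (Finset.sdiff_subset h))
  have hasub : IsRefinement0 I0' F' w a'' := by
    refine ⟨fun e => ?_, fun e he => if_neg he, ?_⟩
    · simp only [ha''def]
      split_ifs
      · exact ha.1 e
      · exact le_refl 0
    · intro i hi hex
      obtain ⟨j, hj⟩ := hex
      have hiI0 : i ∈ I0 := (Finset.mem_sdiff.mp hi).1
      have hiS0 : i ∉ S0 := (Finset.mem_sdiff.mp hi).2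
      have hsubf : F'.filter (fun e => e.1 = i) ⊆ F.filter (fun e => e.1 = i) :=
        Finset.filter_subset_filter _ hF'sub
      have hsum : ∑ e ∈ F'.filter (fun e => e.1 = i), a e
          = ∑ e ∈ F.filter (fun e => e.1 = i), a e := by
        refine Finset.sum_subset hsubf fun e he hne => ?_
        obtain ⟨heF, he1⟩ := Finset.mem_filter.mp he
        have heF' : e ∉ F' := fun hmem => hne (Finset.mem_filter.mpr ⟨hmem, he1⟩)
        exact hzero e heF heF' (he1 ▸ hiS0)
      calc payload0 F' a'' i
          = ∑ e ∈ F'.filter (fun e => e.1 = i), a e :=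
            Finset.sum_congr rfl fun e he => by
              simp only [ha''def]
              rw [if_pos (Finset.mem_filter.mp he).1]
        _ = ∑ e ∈ F.filter (fun e => e.1 = i), a e := hsum
        _ = payload0 F a i := rfl
        _ = w i := ha.2.2 i hiI0 ⟨j, hF'sub hj⟩
  have hmsub : LocallyMaximin0 F' w a'' := by
    intro e he hpos k hk
    have hae : 0 < a e := by simpa only [ha''def, if_pos he] using hpos
    have he2 : e.2 ∈ I1' := (mem_restrictF.mp he).2.2
    have hk2 : k ∈ I1' := (mem_restrictF.mp hk).2.2
    rw [hdens_eq e.2 he2, hdens_eq k hk2]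
    exact hm e (hF'sub he) hae k (mem_restrictF.mp hk).1
  have hstr : ∀ i : V, ∀ j ∈ I1', ((0 : ℝ) < a'' (i, j)) ↔ 0 < a (i, j) := by
    intro i j hj
    simp only [ha''def]
    split_ifs with hF'mem
    · exact Iff.rfl
    · constructor
      · intro h
        exact absurd h (lt_irrefl 0)
      · intro h
        have hijF : (i, j) ∈ F := by
          by_contra hn
          rw [ha.2.1 _ hn] at h
          exact lt_irrefl 0 h
        obtain ⟨hjI1, hjS1⟩ := Finset.mem_sdiff.mp hj
        have hiS0 : i ∉ S0 := fun hS0m => hjS1 (hS0nb i hS0m j hijF)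
        exact absurd (hsame (i, j) hijF hiS0 hjS1) hF'mem
  exact ⟨hGsub, hasub, hmsub, hdens_eq, hstr⟩

lemma decomp_blocks_sub (w : V → ℝ) :
    ∀ (L : List (Finset V × Finset V)) (I0 I1 : Finset V) (F : Finset (V × V)),
      IsDecomp1 w I0 I1 F L → ∀ q ∈ L, q.1 ⊆ I0 ∧ q.2 ⊆ I1 := by
  intro L
  induction L with
  | nil =>
    intro I0 I1 F h q hq
    exact absurd hq List.not_mem_nil
  | cons p rest ih =>
    intro I0 I1 F h q hq
    obtain ⟨_, hmax, hp1, hrest⟩ := h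
    rcases List.mem_cons.mp hq with rfl | hq'
    · constructor
      · rw [hp1]
        exact Finset.filter_subset _ _
      · exact hmax.1
    · have hq2 := ih _ _ _ hrest q hq'
      exact ⟨hq2.1.trans Finset.sdiff_subset, hq2.2.trans Finset.sdiff_subset⟩

/-- Main induction: a locally maximin refinement realizes every density decomposition. -/
lemma main_decomp (w : V → ℝ) :
    ∀ (L : List (Finset V × Finset V)) (I0 I1 : Finset V) (F : Finset (V × V)) (a : V × V → ℝ),
      IsInstance I0 I1 F w → IsRefinement0 I0 F w a → LocallyMaximin0 F w a →
      IsDecomp1 w I0 I1 F L →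
      (∀ p ∈ L, ∀ j ∈ p.2, density1 F w a j = wsum w p.1 / wsum w p.2) ∧
      (∀ p ∈ L, ∀ i : V, i ∈ p.1 ↔ ∃ j ∈ p.2, 0 < a (i, j)) := by
  intro L
  induction L with
  | nil =>
    intro I0 I1 F a hG ha hm hd
    exact ⟨fun p hp => absurd hp List.not_mem_nil,
      fun p hp => absurd hp List.not_mem_nil⟩
  | cons p rest ih =>
    intro I0 I1 F a hG ha hm hd
    obtain ⟨hne, hmax, hp1, hrest⟩ := hd
    by_cases hI1 : I1.Nonempty
    · -- main case
      obtain ⟨hdens, hsupp⟩ := block_analysis hG ha hm hI1 hmax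
      have hS1sub : p.2 ⊆ I1 := hmax.1
      obtain ⟨hG', ha', hm', hdtr, hstr⟩ := sub_instance hG ha hm hS1sub hsupp
      rw [← hp1] at hG' ha' hm' hdtr hstr
      obtain ⟨ihd, ihs⟩ := ih (I0 \ p.1) (I1 \ p.2) _ _ hG' ha' hm' hrest
      constructor
      · intro q hq j hj
        rcases List.mem_cons.mp hq with rfl | hq'
        · rw [hp1]
          exact hdens j hj
        · have hjsub : j ∈ I1 \ p.2 := (decomp_blocks_sub w rest _ _ _ hrest q hq').2 hj
          rw [← hdtr j hjsub]
          exact ihd q hq' j hj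
      · intro q hq i
        rcases List.mem_cons.mp hq with rfl | hq'
        · rw [hp1]
          exact hsupp i
        · rw [ihs q hq' i]
          constructor
          · rintro ⟨j, hj, hpos⟩
            have hjsub : j ∈ I1 \ p.2 := (decomp_blocks_sub w rest _ _ _ hrest q hq').2 hj
            exact ⟨j, hj, (hstr i j hjsub).mp hpos⟩
          · rintro ⟨j, hj, hpos⟩
            have hjsub : j ∈ I1 \ p.2 := (decomp_blocks_sub w rest _ _ _ hrest q hq').2 hj
            exact ⟨j, hj, (hstr i j hjsub).mpr hpos⟩
    · -- empty ground set
      have hI1e : I1 = ∅ := Finset.not_nonempty_iff_eq_empty.mp hI1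
      subst hI1e
      have hFe : F = ∅ := Finset.eq_empty_of_forall_notMem fun e he =>
        Finset.notMem_empty e.2 (hG.2.1 e he).2
      subst hFe
      have hp2 : p.2 = ∅ := Finset.subset_empty.mp hmax.1
      have hp1e : p.1 = ∅ := by
        rw [hp1, hp2]
        exact closedNbr1_empty I0 ∅
      have hrest' : IsDecomp1 w I0 ∅ ∅ rest := by
        have h1 : I0 \ p.1 = I0 := by rw [hp1e, Finset.sdiff_empty]
        have h2 : (∅ : Finset V) \ p.2 = ∅ := by simp
        have h3 : restrictF (∅ : Finset (V × V)) (I0 \ p.1) ((∅ : Finset V) \ p.2) = ∅ := by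
          simp [restrictF]
        rw [h1, h2] at hrest
        rw [show restrictF (∅ : Finset (V × V)) I0 (∅ : Finset V) = ∅ by simp [restrictF]] at hrest
        exact hrest
      obtain ⟨ihd, ihs⟩ := ih I0 ∅ ∅ a hG ha hm hrest'
      constructor
      · intro q hq j hj
        rcases List.mem_cons.mp hq with rfl | hq'
        · rw [hp2] at hj
          exact absurd hj (Finset.notMem_empty j)
        · exact ihd q hq' j hj
      · intro q hq i
        rcases List.mem_cons.mp hq with rfl | hq'
        · rw [hp1e, hp2]
          simp
        · exact ihs q hq' i

end Aux

/-- **A locally maximin refinement realizes the density decomposition.**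
Let `a` be a locally maximin refinement of the side-0 weights, inducing payload densities
`ρ` on `I1`.  Then for any density decomposition `L` of `G` with ground set `I1`:
every `j ∈ S¹_ℓ` has `ρ(j) = w(S⁰_ℓ)/w(S¹_ℓ)`, and `S⁰_ℓ` is exactly the set of vertices
sending positive weight into `S¹_ℓ`.  Moreover, any two locally maximin refinements of the
side-0 weights induce the same payload density vector on `I1`. -/
theorem locally_maximin_gives_density_decomposition
    (I0 I1 : Finset V) (F : Finset (V × V)) (w : V → ℝ)
    (hG : IsInstance I0 I1 F w)
    (a : V × V → ℝ)
    (ha : IsRefinement0 I0 F w a) (hm : LocallyMaximin0 F w a) :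
    (∀ L : List (Finset V × Finset V), IsDecomp1 w I0 I1 F L →
      (∀ p ∈ L, ∀ j ∈ p.2, density1 F w a j = wsum w p.1 / wsum w p.2) ∧
      (∀ p ∈ L, ∀ i : V, i ∈ p.1 ↔ ∃ j ∈ p.2, 0 < a (i, j))) ∧
    (∀ a' : V × V → ℝ, IsRefinement0 I0 F w a' → LocallyMaximin0 F w a' →
      ∀ j ∈ I1, density1 F w a j = density1 F w a' j) :=
  ⟨fun L hL => main_decomp w L I0 I1 F a hG ha hm hL,
   fun a' ha' hm' => maximin_unique hG ha hm ha' hm'⟩
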